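/- arXiv:1109.0573 — 2 statements merged into one kernel-verified Lean document; each statement's English description precedes it below -/
import Mathlib

section
/- Let A₁,…,A_m be Hermitian matrices whose real span contains the identity matrix I, and let b ∈ ℝ^m. Suppose x₀ ∈ ℂⁿ is nonzero and X₀ = x₀x₀* is the unique positive semidefinite matrix of rank at most one satisfying Tr(A_k X) = b_k for all k. Then for every ε > 0, X₀ is the unique minimizer of f(X) = log det(X + εI) over the feasible set {X ⪰ 0 : Tr(A_k X) = b_k for all k}, among matrices X ≠ X₀ the value f(X) is strictly larger. -/
open Matrix
open scoped ComplexOrder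

lemma aux_one_add_sum_le {ι : Type*} (s : Finset ι) (f : ι → ℝ)
    (h : ∀ i ∈ s, 0 ≤ f i) : 1 + ∑ i ∈ s, f i ≤ ∏ i ∈ s, (1 + f i) := by
  classical
  induction s using Finset.induction_on with
  | empty => simp
  | insert a s ha ih =>
    rw [Finset.sum_insert ha, Finset.prod_insert ha]
    have h1 : 0 ≤ f a := h a (Finset.mem_insert_self a s)
    have h2 : ∀ i ∈ s, 0 ≤ f i := fun i hi => h i (Finset.mem_insert_of_mem hi)
    have h3 := ih h2
    have h4 : 0 ≤ ∑ i ∈ s, f i := Finset.sum_nonneg h2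
    nlinarith

lemma aux_one_add_sum_lt {ι : Type*} [DecidableEq ι] (s : Finset ι) (f : ι → ℝ)
    (h : ∀ i ∈ s, 0 ≤ f i) (i j : ι) (hi : i ∈ s) (hj : j ∈ s) (hij : i ≠ j)
    (hfi : 0 < f i) (hfj : 0 < f j) :
    1 + ∑ k ∈ s, f k < ∏ k ∈ s, (1 + f k) := by
  rw [← Finset.add_sum_erase s f hi, ← Finset.mul_prod_erase s _ hi]
  have hj' : j ∈ s.erase i := Finset.mem_erase.2 ⟨hij.symm, hj⟩
  have h2 : ∀ k ∈ s.erase i, 0 ≤ f k := fun k hk => h k (Finset.mem_of_mem_erase hk)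
  have h3 := aux_one_add_sum_le (s.erase i) f h2
  have h4 : f j ≤ ∑ k ∈ s.erase i, f k := Finset.single_le_sum h2 hj'
  nlinarith

lemma aux_det_lt {n : ℕ} (lam : Fin n → ℝ) (hlam : ∀ k, 0 ≤ lam k) (ε : ℝ) (hε : 0 < ε)
    (i j : Fin n) (hij : i ≠ j) (hi : 0 < lam i) (hj : 0 < lam j) :
    ε ^ (n - 1) * (ε + ∑ k, lam k) < ∏ k, (lam k + ε) := by
  have hn : n ≠ 0 := by rintro rfl; exact i.elim0
  have h1 : ∏ k, (lam k + ε) = ε ^ n * ∏ k, (1 + lam k / ε) := by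
    calc ∏ k, (lam k + ε) = ∏ k, (ε * (1 + lam k / ε)) := by
          apply Finset.prod_congr rfl; intro k _; field_simp; ring
      _ = ε ^ n * ∏ k, (1 + lam k / ε) := by
          rw [Finset.prod_mul_distrib, Finset.prod_const, Finset.card_univ, Fintype.card_fin]
  have h2 := aux_one_add_sum_lt Finset.univ (fun k => lam k / ε)
    (fun k _ => div_nonneg (hlam k) hε.le) i j (Finset.mem_univ i) (Finset.mem_univ j) hij
    (div_pos hi hε) (div_pos hj hε)
  have h5 : ε ^ n = ε ^ (n - 1) * ε := by
    rw [← pow_succ, Nat.sub_add_cancel (Nat.one_le_iff_ne_zero.2 hn)]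
  have h6 : ε ^ n * (1 + ∑ k, lam k / ε) = ε ^ (n - 1) * (ε + ∑ k, lam k) := by
    rw [← Finset.sum_div, h5]; field_simp
  have h7 := mul_lt_mul_of_pos_left h2 (pow_pos hε n)
  rw [h6] at h7
  rw [h1]
  exact h7

lemma aux_det_le {n : ℕ} (hn : n ≠ 0) (mu : Fin n → ℝ) (hmu : ∀ k, 0 ≤ mu k) (ε : ℝ) (hε : 0 < ε)
    (hcard : ∀ a b : Fin n, mu a ≠ 0 → mu b ≠ 0 → a = b) :
    ∏ k, (mu k + ε) ≤ ε ^ (n - 1) * (ε + ∑ k, mu k) := by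
  by_cases hz : ∀ k, mu k = 0
  · have h5 : ε ^ n = ε ^ (n - 1) * ε := by
      rw [← pow_succ, Nat.sub_add_cancel (Nat.one_le_iff_ne_zero.2 hn)]
    simp [hz, Finset.prod_const, Finset.card_univ, h5]
  · push_neg at hz
    obtain ⟨j, hjne⟩ := hz
    have hrest : ∀ k, k ≠ j → mu k = 0 := by
      intro k hk
      by_contra hk'
      exact hk (hcard k j hk' hjne)
    have hprod : ∏ k, (mu k + ε) = (mu j + ε) * ε ^ (n - 1) := by
      rw [← Finset.mul_prod_erase Finset.univ _ (Finset.mem_univ j)]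
      congr 1
      rw [Finset.prod_congr rfl (fun k hk => by
        rw [hrest k (Finset.mem_erase.1 hk).1, zero_add]),
        Finset.prod_const, Finset.card_erase_of_mem (Finset.mem_univ j),
        Finset.card_univ, Fintype.card_fin]
    have hsum : ∑ k, mu k = mu j := by
      rw [← Finset.add_sum_erase Finset.univ _ (Finset.mem_univ j),
        Finset.sum_congr rfl (fun k hk => hrest k (Finset.mem_erase.1 hk).1),
        Finset.sum_const, smul_zero, add_zero]
    rw [hprod, hsum]; ring_nf; rfl

lemma aux_conj_diag {n : ℕ} {B : Matrix (Fin n) (Fin n) ℂ} (hB : B.IsHermitian) (ε : ℝ) :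
    (star (hB.eigenvectorUnitary : Matrix (Fin n) (Fin n) ℂ)) * (B + (ε : ℂ) • 1) *
      (hB.eigenvectorUnitary : Matrix (Fin n) (Fin n) ℂ) =
    diagonal (fun i => (hB.eigenvalues i : ℂ) + ε) := by
  set U := (hB.eigenvectorUnitary : Matrix (Fin n) (Fin n) ℂ) with hUdef
  have hU2 : star U * U = 1 := Matrix.mem_unitaryGroup_iff'.mp hB.eigenvectorUnitary.2
  have hdiag : star U * B * U = diagonal (RCLike.ofReal ∘ hB.eigenvalues) := by
    have := hB.conjStarAlgAut_star_eigenvectorUnitary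
    rw [Unitary.conjStarAlgAut_star_apply] at this
    exact this
  have h1 : star U * ((ε : ℂ) • 1) * U = (ε : ℂ) • 1 := by
    rw [Matrix.mul_smul, Matrix.smul_mul, mul_one, hU2]
  rw [mul_add, add_mul, hdiag, h1, Matrix.smul_one_eq_diagonal, diagonal_add]
  rfl

lemma aux_det_re {n : ℕ} {B : Matrix (Fin n) (Fin n) ℂ} (hB : B.IsHermitian) (ε : ℝ) :
    (B + (ε : ℂ) • 1).det.re = ∏ i, (hB.eigenvalues i + ε) := by
  set U := (hB.eigenvectorUnitary : Matrix (Fin n) (Fin n) ℂ) with hUdef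
  have hU2 : star U * U = 1 := Matrix.mem_unitaryGroup_iff'.mp hB.eigenvectorUnitary.2
  have hdetU : (star U).det * U.det = 1 := by
    rw [← Matrix.det_mul, hU2, Matrix.det_one]
  have key := congrArg Matrix.det (aux_conj_diag hB ε)
  rw [Matrix.det_mul, Matrix.det_mul, Matrix.det_diagonal] at key
  have key2 : (B + (ε : ℂ) • 1).det = ∏ i, ((hB.eigenvalues i : ℂ) + ε) := by
    have := key
    calc (B + (ε : ℂ) • 1).det
        = (star U).det * (B + (ε : ℂ) • 1).det * U.det := by
          rw [mul_comm (star U).det, mul_assoc, hdetU, mul_one]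
      _ = ∏ i, ((hB.eigenvalues i : ℂ) + ε) := key
  rw [key2]
  have : (∏ i, ((hB.eigenvalues i : ℂ) + ε)) = (((∏ i, (hB.eigenvalues i + ε)) : ℝ) : ℂ) := by
    push_cast; ring
  rw [this, Complex.ofReal_re]

lemma aux_trace_eq {n : ℕ} {B : Matrix (Fin n) (Fin n) ℂ} (hB : B.IsHermitian) :
    B.trace = (((∑ i, hB.eigenvalues i) : ℝ) : ℂ) := by
  have hU1 : (hB.eigenvectorUnitary : Matrix (Fin n) (Fin n) ℂ) *
      star (hB.eigenvectorUnitary : Matrix (Fin n) (Fin n) ℂ) = 1 :=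
    Matrix.mem_unitaryGroup_iff.mp hB.eigenvectorUnitary.2
  have hdiag : (star (hB.eigenvectorUnitary : Matrix (Fin n) (Fin n) ℂ)) * B *
      (hB.eigenvectorUnitary : Matrix (Fin n) (Fin n) ℂ) =
      diagonal (RCLike.ofReal ∘ hB.eigenvalues) := by
    have := hB.conjStarAlgAut_star_eigenvectorUnitary
    rw [Unitary.conjStarAlgAut_star_apply] at this
    exact this
  have key := congrArg Matrix.trace hdiag
  rw [Matrix.trace_mul_cycle, hU1, one_mul, Matrix.trace_diagonal] at key
  rw [key]
  push_cast
  rfl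
theorem logdet_unique_minimizer (n m : ℕ) (A : Fin m → Matrix (Fin n) (Fin n) ℂ)
    (hA : ∀ k, (A k).IsHermitian)
    (hI : (1 : Matrix (Fin n) (Fin n) ℂ) ∈ Submodule.span ℝ (Set.range A))
    (b : Fin m → ℝ) (x₀ : Fin n → ℂ) (hx₀ : x₀ ≠ 0)
    (X₀ : Matrix (Fin n) (Fin n) ℂ)
    (hX₀ : X₀ = Matrix.of fun i j => x₀ i * (starRingEnd ℂ) (x₀ j))
    (hfeas : X₀.PosSemidef ∧ ∀ k, (A k * X₀).trace = (b k : ℂ))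
    (huniq : ∀ X : Matrix (Fin n) (Fin n) ℂ, X.PosSemidef →
      (∀ k, (A k * X).trace = (b k : ℂ)) → X.rank ≤ 1 → X = X₀) :
    ∀ ε : ℝ, 0 < ε →
      ∀ X : Matrix (Fin n) (Fin n) ℂ, X.PosSemidef →
        (∀ k, (A k * X).trace = (b k : ℂ)) → X ≠ X₀ →
        Real.log ((X₀ + (ε : ℂ) • 1).det.re) <
          Real.log ((X + (ε : ℂ) • 1).det.re) := by
  intro ε hε X hX hXfeas hne
  have hn : n ≠ 0 := by
    rintro rfl
    exact hx₀ (funext fun i => i.elim0)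
  have hX₀psd : X₀.PosSemidef := hfeas.1
  have hX₀h : X₀.IsHermitian := hX₀psd.1
  have hXh : X.IsHermitian := hX.1
  -- trace equality on the feasible set
  obtain ⟨c, hc⟩ := (Submodule.mem_span_range_iff_exists_fun ℝ).mp hI
  have htr : ∀ Y : Matrix (Fin n) (Fin n) ℂ, (∀ k, (A k * Y).trace = (b k : ℂ)) →
      Y.trace = ∑ k, ((c k : ℂ) * (b k : ℂ)) := by
    intro Y hY
    calc Y.trace = ((1 : Matrix (Fin n) (Fin n) ℂ) * Y).trace := by rw [one_mul]
      _ = ((∑ k, c k • A k) * Y).trace := by rw [hc]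
      _ = ∑ k, ((c k • A k) * Y).trace := by rw [Finset.sum_mul, Matrix.trace_sum]
      _ = ∑ k, ((c k : ℂ) * (b k : ℂ)) := by
          refine Finset.sum_congr rfl fun k _ => ?_
          rw [Matrix.smul_mul, Matrix.trace_smul, hY k, Complex.real_smul]
  have htrXX₀ : X.trace = X₀.trace := ((htr X hXfeas).trans (htr X₀ hfeas.2).symm)
  have hsum : ∑ i, hXh.eigenvalues i = ∑ i, hX₀h.eigenvalues i := by
    have h1 := aux_trace_eq hXh
    have h2 := aux_trace_eq hX₀h
    rw [h1, h2] at htrXX₀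
    exact_mod_cast htrXX₀
  -- X₀ has rank at most one
  have hX₀rank : X₀.rank ≤ 1 := by
    have hEq : X₀ = Matrix.replicateCol (Fin 1) x₀ * Matrix.replicateRow (Fin 1) (star x₀) := by
      refine hX₀.trans ((?_ : _ = Matrix.vecMulVec x₀ (star x₀)).trans (Matrix.vecMulVec_eq (Fin 1) _ _))
      ext i j
      simp [Matrix.vecMulVec_apply]
    calc X₀.rank ≤ (Matrix.replicateCol (Fin 1) x₀).rank := by rw [hEq]; exact Matrix.rank_mul_le_left _ _
      _ ≤ Fintype.card (Fin 1) := Matrix.rank_le_card_width _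
      _ = 1 := by simp
  have hcard : ∀ a b : Fin n, hX₀h.eigenvalues a ≠ 0 → hX₀h.eigenvalues b ≠ 0 → a = b := by
    intro a b ha hb
    have hle1 : Fintype.card {i // hX₀h.eigenvalues i ≠ 0} ≤ 1 := by
      rw [← hX₀h.rank_eq_card_non_zero_eigs]; exact hX₀rank
    exact congrArg Subtype.val (Fintype.card_le_one_iff.mp hle1 ⟨a, ha⟩ ⟨b, hb⟩)
  -- X has rank at least two, hence two positive eigenvalues
  have hrk : 1 < Fintype.card {i // hXh.eigenvalues i ≠ 0} := by
    rw [← hXh.rank_eq_card_non_zero_eigs]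
    by_contra h
    push_neg at h
    exact hne (huniq X hX hXfeas h)
  obtain ⟨a, b', hab⟩ := Fintype.one_lt_card_iff.mp hrk
  have hab' : (a : Fin n) ≠ (b' : Fin n) := fun h => hab (Subtype.ext h)
  have hapos : 0 < hXh.eigenvalues a := lt_of_le_of_ne (hX.eigenvalues_nonneg a) (Ne.symm a.2)
  have hbpos : 0 < hXh.eigenvalues b' := lt_of_le_of_ne (hX.eigenvalues_nonneg b') (Ne.symm b'.2)
  -- final comparison
  rw [aux_det_re hX₀h ε, aux_det_re hXh ε]
  have hLpos : 0 < ∏ i, (hX₀h.eigenvalues i + ε) :=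
    Finset.prod_pos fun i _ => add_pos_of_nonneg_of_pos (hX₀psd.eigenvalues_nonneg i) hε
  apply Real.log_lt_log hLpos
  have hle := aux_det_le hn hX₀h.eigenvalues hX₀psd.eigenvalues_nonneg ε hε hcard
  have hlt := aux_det_lt hXh.eigenvalues hX.eigenvalues_nonneg ε hε a b' hab' hapos hbpos
  rw [← hsum] at hle
  exact lt_of_le_of_lt hle hlt
end

section
/- Let x ∈ ℂⁿ whose DFT x̂ never vanishes, and suppose gcd(s,n) = 1. Then x is uniquely determined up to a global unimodular phase factor by the 3n real numbers |F x|², |F(x + Dˢx)|², |F(x − iDˢx)|², where D = diag(e^{2πit/n}, t = 0,…,n−1) and F is the unitary DFT. -/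
noncomputable def dft {n : ℕ} [NeZero n] (x : ZMod n → ℂ) (k : ZMod n) : ℂ :=
  (Real.sqrt n)⁻¹ * ∑ t : ZMod n,
    x t * Complex.exp (-(2 * Real.pi * Complex.I * (k.val : ℂ) * (t.val : ℂ)) / n)

noncomputable def modulate {n : ℕ} [NeZero n] (s : ℤ) (x : ZMod n → ℂ) : ZMod n → ℂ :=
  fun t => Complex.exp (2 * Real.pi * Complex.I * (s : ℂ) * (t.val : ℂ) / n) * x t

lemma exp_zmod_congr (n : ℕ) [NeZero n] {a b : ℤ} (h : (a : ZMod n) = (b : ZMod n)) :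
    Complex.exp (2 * Real.pi * Complex.I * (a : ℂ) / n) =
      Complex.exp (2 * Real.pi * Complex.I * (b : ℂ) / n) := by
  rw [← ZMod.stdAddChar_coe (N := n) a, ← ZMod.stdAddChar_coe (N := n) b, h]

lemma dft_eq {n : ℕ} [NeZero n] (x : ZMod n → ℂ) (k : ZMod n) :
    dft x k = (Real.sqrt n)⁻¹ * ZMod.dft x k := by
  rw [dft, ZMod.dft_apply]
  congr 1
  refine Finset.sum_congr rfl fun t _ => ?_
  rw [smul_eq_mul, mul_comm]
  congr 1
  have h : (-(t * k) : ZMod n) = ((-(k.val * t.val : ℤ) : ℤ) : ZMod n) := by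
    push_cast [ZMod.natCast_val, ZMod.intCast_zmod_cast]
    ring
  rw [h, ZMod.stdAddChar_coe]
  congr 1
  push_cast
  ring

lemma dft_add {n : ℕ} [NeZero n] (f g : ZMod n → ℂ) (k : ZMod n) :
    dft (fun t => f t + g t) k = dft f k + dft g k := by
  simp only [dft, ← mul_add, ← Finset.sum_add_distrib, add_mul]

lemma dft_const_mul' {n : ℕ} [NeZero n] (c : ℂ) (f : ZMod n → ℂ) (k : ZMod n) :
    dft (fun t => c * f t) k = c * dft f k := by
  simp only [dft, Finset.mul_sum, ← mul_assoc]
  refine Finset.sum_congr rfl fun t _ => by ring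

lemma dft_sub_mul {n : ℕ} [NeZero n] (c : ℂ) (f g : ZMod n → ℂ) (k : ZMod n) :
    dft (fun t => f t - c * g t) k = dft f k - c * dft g k := by
  have := dft_add f (fun t => (-c) * g t) k
  simp only [neg_mul, ← sub_eq_add_neg] at this
  rw [show (fun t => f t - c * g t) = (fun t => f t + (-c) * g t) by funext t; ring, dft_add,
    dft_const_mul']
  ring

lemma dft_modulate {n : ℕ} [NeZero n] (s : ℤ) (x : ZMod n → ℂ) (k : ZMod n) :
    dft (modulate s x) k = dft x (k - (s : ZMod n)) := by
  unfold dft modulate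
  congr 1
  refine Finset.sum_congr rfl fun t _ => ?_
  rw [mul_comm (Complex.exp _) (x t), mul_assoc, ← Complex.exp_add]
  congr 1
  have e1 : 2 * (Real.pi:ℂ) * Complex.I * (s:ℂ) * (t.val:ℂ) / n +
      -(2 * (Real.pi:ℂ) * Complex.I * (k.val:ℂ) * (t.val:ℂ)) / n =
      2 * (Real.pi:ℂ) * Complex.I * (((s - (k.val:ℤ)) * (t.val:ℤ) : ℤ) : ℂ) / n := by
    push_cast; ring
  have e2 : -(2 * (Real.pi:ℂ) * Complex.I * (((k - (s:ZMod n)).val:ℂ)) * ((t.val:ℂ))) / n =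
      2 * (Real.pi:ℂ) * Complex.I * ((-((((k - (s:ZMod n)).val:ℤ)) * (t.val:ℤ)) : ℤ) : ℂ) / n := by
    push_cast; ring
  rw [e1, e2]
  apply exp_zmod_congr
  push_cast [ZMod.natCast_val, ZMod.intCast_zmod_cast]
  ring

lemma key_prod {a b a' b' : ℂ} (e1 : ‖a‖ = ‖a'‖)
    (e2 : ‖b‖ = ‖b'‖)
    (e3 : ‖a + b‖ = ‖a' + b'‖)
    (e4 : ‖a - Complex.I * b‖ = ‖a' - Complex.I * b'‖) :
    a * (starRingEnd ℂ) b = a' * (starRingEnd ℂ) b' := by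
  have n1 : Complex.normSq a = Complex.normSq a' := by
    rw [← Complex.sq_norm, ← Complex.sq_norm, e1]
  have n2 : Complex.normSq b = Complex.normSq b' := by
    rw [← Complex.sq_norm, ← Complex.sq_norm, e2]
  have n3 : Complex.normSq (a + b) = Complex.normSq (a' + b') := by
    rw [← Complex.sq_norm, ← Complex.sq_norm, e3]
  have n4 : Complex.normSq (a - Complex.I * b) = Complex.normSq (a' - Complex.I * b') := by
    rw [← Complex.sq_norm, ← Complex.sq_norm, e4]
  simp only [Complex.normSq_apply, Complex.add_re, Complex.add_im, Complex.sub_re,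
    Complex.sub_im, Complex.mul_re, Complex.mul_im, Complex.I_re, Complex.I_im] at n1 n2 n3 n4
  ring_nf at n1 n2 n3 n4
  apply Complex.ext <;>
    simp only [Complex.mul_re, Complex.mul_im, Complex.conj_re, Complex.conj_im] <;>
    ring_nf <;> linarith


theorem phase_retrieval_1D (n : ℕ) [NeZero n] (s : ℤ) (hs : Int.gcd s n = 1)
    (x y : ZMod n → ℂ) (hx : ∀ k, dft x k ≠ 0)
    (h1 : ∀ k, ‖dft y k‖ = ‖dft x k‖)
    (h2 : ∀ k, ‖dft (fun t => y t + modulate s y t) k‖ =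
               ‖dft (fun t => x t + modulate s x t) k‖)
    (h3 : ∀ k, ‖dft (fun t => y t - Complex.I * modulate s y t) k‖ =
               ‖dft (fun t => x t - Complex.I * modulate s x t) k‖) :
    ∃ c : ℂ, ‖c‖ = 1 ∧ y = fun t => c * x t := by
  set sz : ZMod n := (s : ZMod n) with hsz
  have hprod : ∀ k, dft y k * (starRingEnd ℂ) (dft y (k - sz)) =
      dft x k * (starRingEnd ℂ) (dft x (k - sz)) := by
    intro k
    have a2y : dft (fun t => y t + modulate s y t) k = dft y k + dft y (k - sz) := by
      rw [dft_add, dft_modulate]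
    have a2x : dft (fun t => x t + modulate s x t) k = dft x k + dft x (k - sz) := by
      rw [dft_add, dft_modulate]
    have a3y : dft (fun t => y t - Complex.I * modulate s y t) k =
        dft y k - Complex.I * dft y (k - sz) := by
      rw [dft_sub_mul, dft_modulate]
    have a3x : dft (fun t => x t - Complex.I * modulate s x t) k =
        dft x k - Complex.I * dft x (k - sz) := by
      rw [dft_sub_mul, dft_modulate]
    refine key_prod (h1 k) (h1 (k - sz)) ?_ ?_
    · rw [← a2y, ← a2x]; exact h2 k
    · rw [← a3y, ← a3x]; exact h3 k
  have hr : ∀ k, dft y k / dft x k = dft y (k - sz) / dft x (k - sz) := by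
    intro k
    have hcx' : (starRingEnd ℂ) (dft x (k - sz)) ≠ 0 := by
      simpa using hx (k - sz)
    have hb : dft y (k - sz) * (starRingEnd ℂ) (dft y (k - sz)) =
        dft x (k - sz) * (starRingEnd ℂ) (dft x (k - sz)) := by
      rw [Complex.mul_conj, Complex.mul_conj]
      have : Complex.normSq (dft y (k - sz)) = Complex.normSq (dft x (k - sz)) := by
        rw [← Complex.sq_norm, ← Complex.sq_norm, h1]
      exact_mod_cast this
    have key : dft y k * dft x (k - sz) * (starRingEnd ℂ) (dft x (k - sz)) =
        dft y (k - sz) * dft x k * (starRingEnd ℂ) (dft x (k - sz)) := by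
      calc dft y k * dft x (k - sz) * (starRingEnd ℂ) (dft x (k - sz))
          = dft y k * (dft x (k - sz) * (starRingEnd ℂ) (dft x (k - sz))) := by ring
        _ = dft y k * (dft y (k - sz) * (starRingEnd ℂ) (dft y (k - sz))) := by rw [← hb]
        _ = (dft y k * (starRingEnd ℂ) (dft y (k - sz))) * dft y (k - sz) := by ring
        _ = (dft x k * (starRingEnd ℂ) (dft x (k - sz))) * dft y (k - sz) := by rw [hprod k]
        _ = dft y (k - sz) * dft x k * (starRingEnd ℂ) (dft x (k - sz)) := by ring
    rw [div_eq_div_iff (hx k) (hx (k - sz))]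
    exact mul_right_cancel₀ hcx' key
  have hm : ∀ m : ℕ, ∀ k, dft y k / dft x k = dft y (k - m * sz) / dft x (k - m * sz) := by
    intro m
    induction m with
    | zero => intro k; simp
    | succ m ih =>
      intro k
      rw [hr k, ih (k - sz)]
      congr 2 <;> · push_cast; ring
  have hu : IsUnit sz := by
    obtain ⟨a, b, hab⟩ := Int.isCoprime_iff_gcd_eq_one.mpr hs
    refine IsUnit.of_mul_eq_one (a := sz) (a : ZMod n) ?_
    have : ((a * s + b * n : ℤ) : ZMod n) = 1 := by rw [hab]; norm_cast
    push_cast at this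
    rw [ZMod.natCast_self] at this
    rw [mul_comm]
    linear_combination this
  have hr0 : ∀ k, dft y k / dft x k = dft y 0 / dft x 0 := by
    intro k
    obtain ⟨u, huu⟩ := hu
    have := hm ((↑u⁻¹ * k : ZMod n).val) k
    have hmv : (((↑u⁻¹ * k : ZMod n).val : ℕ) : ZMod n) * sz = k := by
      simp only [ZMod.natCast_val, ZMod.cast_id]
      rw [← huu, mul_comm]
      exact u.mul_inv_cancel_left k
    rw [hmv, sub_self] at this
    exact this
  set c : ℂ := dft y 0 / dft x 0 with hc
  have habs : ‖c‖ = 1 := by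
    rw [hc, norm_div, h1 0, div_self]
    simpa using hx 0
  refine ⟨c, habs, ?_⟩
  have hdfteq : ∀ k, dft y k = dft (fun t => c * x t) k := by
    intro k
    rw [dft_const_mul']
    have := hr0 k
    calc dft y k = (dft y k / dft x k) * dft x k := (div_mul_cancel₀ _ (hx k)).symm
      _ = c * dft x k := by rw [this]
  have hsn : ((((Real.sqrt n)⁻¹ : ℝ)) : ℂ) ≠ 0 := by
    simp only [ne_eq, Complex.ofReal_eq_zero, inv_eq_zero]
    exact Real.sqrt_ne_zero'.mpr (by exact_mod_cast Nat.pos_of_ne_zero (NeZero.ne n))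
  have : ZMod.dft y = ZMod.dft (fun t => c * x t) := by
    ext k
    have h := hdfteq k
    rw [dft_eq, dft_eq] at h
    exact mul_left_cancel₀ hsn h
  exact ZMod.dft.injective this
end
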